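/- Hashing by an irreducible polynomial (General) is pairwise independent: let p(x) be irreducible of degree L ≥ n over GF(2), let h₁ : Σ → GF(2)[x]/p(x) be a uniformly random function, and define h(a₁,…,a_n) = Σ_{i=1}^{n} h₁(aᵢ) x^{n-i} in GF(2)[x]/p(x). Then for any two distinct n-grams a, a' and any values y, y', P(h(a)=y ∧ h(a')=y') = 2^{-2L}. -/

import Mathlib

/-- Uniform probability of an event over a finite sample space. -/
noncomputable def prob (Ω : Type*) (p : Ω → Prop) : ℚ :=
  (Nat.card {ω : Ω // p ω} : ℚ) / (Nat.card Ω : ℚ)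

open Polynomial

/-- The hash as a linear map on the space of random functions. -/
noncomputable def hashL {σ : Type*} [Fintype σ] (n : ℕ) {K : Type*} [CommRing K]
    (r : K) (b : Fin n → σ) : (σ → K) →ₗ[K] K where
  toFun h := ∑ i : Fin n, h (b i) * r ^ (n - 1 - (i : ℕ))
  map_add' f g := by simp [add_mul, Finset.sum_add_distrib]
  map_smul' c f := by simp [Finset.mul_sum, mul_assoc]

@[simp] lemma hashL_apply {σ : Type*} [Fintype σ] (n : ℕ) {K : Type*} [CommRing K]
    (r : K) (b : Fin n → σ) (h : σ → K) :
    hashL n r b h = ∑ i : Fin n, h (b i) * r ^ (n - 1 - (i : ℕ)) := rfl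

set_option maxHeartbeats 1000000
set_option synthInstance.maxHeartbeats 400000

/-- Hashing by an irreducible polynomial (General) is pairwise independent. -/
theorem general_pairwise_independent
    {σ : Type*} [Fintype σ] (n L : ℕ) (hnL : n ≤ L)
    (p : Polynomial (ZMod 2)) (hp : Irreducible p) (hdeg : p.natDegree = L)
    (a a' : Fin n → σ) (haa : a ≠ a') (y y' : AdjoinRoot p) :
    prob (σ → AdjoinRoot p)
      (fun h₁ =>
        (∑ i : Fin n, h₁ (a i) * (AdjoinRoot.root p) ^ (n - 1 - (i : ℕ))) = y ∧
        (∑ i : Fin n, h₁ (a' i) * (AdjoinRoot.root p) ^ (n - 1 - (i : ℕ))) = y')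
      = 1 / 2 ^ (2 * L) := by
  classical
  haveI := Fact.mk hp
  set r : AdjoinRoot p := AdjoinRoot.root p with hr
  let K := AdjoinRoot p
  have hn : 0 < n := by
    rcases Nat.eq_zero_or_pos n with h | h
    · subst h; exact absurd (_root_.funext fun i => i.elim0) haa
    · exact h
  -- power basis facts
  have hp0 : p ≠ 0 := hp.ne_zero
  set pb := AdjoinRoot.powerBasis hp0 with hpb
  have hLI : LinearIndependent (ZMod 2) (fun i : Fin p.natDegree => r ^ (i : ℕ)) := by
    have h1 := pb.basis.linearIndependent
    have h2 : ∀ i : Fin p.natDegree, pb.basis i = r ^ (i : ℕ) := pb.basis_eq_pow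
    rwa [funext h2] at h1
  have hLIn : LinearIndependent (ZMod 2) (fun i : Fin n => r ^ (i : ℕ)) := by
    have := hLI.comp (Fin.castLE (hdeg ▸ hnL)) (Fin.castLE_injective _)
    exact this
  -- key: reflected linear independence
  have key0 : ∀ g : Fin n → ZMod 2,
      (∑ i : Fin n, g i • r ^ (n - 1 - (i : ℕ))) = 0 → ∀ i, g i = 0 := by
    intro g hg i
    have hsum : ∑ j : Fin n, (g j.rev) • r ^ (j : ℕ) = 0 := by
      rw [← hg]
      refine (Fintype.sum_equiv (Fin.revPerm (n := n))
        (fun i => g i • r ^ (n - 1 - (i : ℕ))) (fun j => g j.rev • r ^ (j : ℕ)) ?_).symm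
      intro x
      have hval : ((Fin.rev x : Fin n) : ℕ) = n - 1 - (x : ℕ) := by
        rw [Fin.val_rev]; omega
      simp only [Fin.revPerm_apply, Fin.rev_rev, hval]
    have := Fintype.linearIndependent_iff.mp hLIn (fun j => g j.rev) hsum i.rev
    simpa using this
  -- T ≠ 0
  set T : K := ∑ i : Fin n, r ^ (n - 1 - (i : ℕ)) with hT
  have hTne : T ≠ 0 := by
    intro h0
    have := key0 (fun _ => 1) (by simpa [one_smul] using h0) ⟨0, hn⟩
    exact one_ne_zero this
  -- linear maps
  set La : (σ → K) →ₗ[K] K := hashL n r a with hLa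
  set Lb : (σ → K) →ₗ[K] K := hashL n r a' with hLb
  set Φ : (σ → K) →ₗ[K] K × K := La.prod Lb with hΦ
  -- independence key
  have key : ∀ α β : K, (∀ h : σ → K, La h * α + Lb h * β = 0) → α = 0 ∧ β = 0 := by
    intro α β H
    have Hc : ∀ s : σ,
        (∑ i : Fin n, (if a i = s then (1 : K) else 0) * r ^ (n - 1 - (i : ℕ))) * α +
        (∑ i : Fin n, (if a' i = s then (1 : K) else 0) * r ^ (n - 1 - (i : ℕ))) * β = 0 := by
      intro s
      have := H (Pi.single s 1)
      simpa [hLa, hLb, hashL_apply, Pi.single_apply] using this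
    have hswap : ∀ b : Fin n → σ,
        (∑ s : σ, ∑ i : Fin n, (if b i = s then (1 : K) else 0) * r ^ (n - 1 - (i : ℕ))) = T := by
      intro b
      rw [Finset.sum_comm]
      refine Finset.sum_congr rfl fun i _ => ?_
      simp [ite_mul]
    have Hsum : T * (α + β) = 0 := by
      have h1 : ∑ s : σ, ((∑ i : Fin n, (if a i = s then (1 : K) else 0) * r ^ (n - 1 - (i : ℕ))) * α +
          (∑ i : Fin n, (if a' i = s then (1 : K) else 0) * r ^ (n - 1 - (i : ℕ))) * β) = 0 :=
        Finset.sum_eq_zero fun s _ => Hc s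
      rw [Finset.sum_add_distrib, ← Finset.sum_mul, ← Finset.sum_mul, hswap, hswap] at h1
      rw [mul_add]; exact h1
    have hab : β = -α := by
      rcases mul_eq_zero.mp Hsum with h | h
      · exact absurd h hTne
      · linear_combination h
    by_cases hα : α = 0
    · exact ⟨hα, by rw [hab, hα, neg_zero]⟩
    · exfalso
      apply haa
      funext i₀
      have Hs := Hc (a i₀)
      rw [hab] at Hs
      have hdiff : (∑ i : Fin n, (if a i = a i₀ then (1 : K) else 0) * r ^ (n - 1 - (i : ℕ))) -
          (∑ i : Fin n, (if a' i = a i₀ then (1 : K) else 0) * r ^ (n - 1 - (i : ℕ))) = 0 := by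
        have h2 : ((∑ i : Fin n, (if a i = a i₀ then (1 : K) else 0) * r ^ (n - 1 - (i : ℕ))) -
            (∑ i : Fin n, (if a' i = a i₀ then (1 : K) else 0) * r ^ (n - 1 - (i : ℕ)))) * α = 0 := by
          linear_combination Hs
        rcases mul_eq_zero.mp h2 with h | h
        · exact h
        · exact absurd h hα
      set g : Fin n → ZMod 2 := fun i =>
        (if a i = a i₀ then (1 : ZMod 2) else 0) - (if a' i = a i₀ then (1 : ZMod 2) else 0) with hg
      have hgsum : (∑ i : Fin n, g i • r ^ (n - 1 - (i : ℕ))) = 0 := by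
        rw [← hdiff, ← Finset.sum_sub_distrib]
        refine Finset.sum_congr rfl fun i _ => ?_
        simp only [hg, sub_smul]
        congr 1 <;> split_ifs <;> simp
      have hgz := key0 g hgsum i₀
      simp only [hg, eq_self_iff_true, if_true] at hgz
      by_cases hc : a' i₀ = a i₀
      · exact hc.symm
      · rw [if_neg hc] at hgz
        exact absurd hgz (by decide)
  -- surjectivity
  set v : σ → K := fun _ => (1 : K) with hvdef
  have hvT : La v = T := by simp [hLa, hashL_apply, hvdef, hT]
  have hsurj : Function.Surjective Φ := by
    have hu : ∃ u : σ → K, La u = 0 ∧ Lb u ≠ 0 := by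
      by_contra hcon
      push_neg at hcon
      have H : ∀ h : σ → K, La h * (Lb v / T) + Lb h * (-1) = 0 := by
        intro h
        have hw : La (h - (La h / T) • v) = 0 := by
          rw [map_sub, map_smul, smul_eq_mul, hvT]
          rw [div_mul_cancel₀ _ hTne, sub_self]
        have h2 := hcon _ hw
        rw [map_sub, map_smul, smul_eq_mul] at h2
        linear_combination -h2
      obtain ⟨-, h1⟩ := key _ _ H
      simpa using h1
    obtain ⟨u, hu0, hu1⟩ := hu
    have hv : La v ≠ 0 := by rw [hvT]; exact hTne
    rintro ⟨z1, z2⟩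
    refine ⟨(z1 / La v) • v + ((z2 - (z1 / La v) * Lb v) / Lb u) • u, ?_⟩
    have h1 : La ((z1 / La v) • v + ((z2 - (z1 / La v) * Lb v) / Lb u) • u) = z1 := by
      rw [map_add, map_smul, map_smul, smul_eq_mul, smul_eq_mul, hu0, mul_zero, add_zero,
        div_mul_cancel₀ _ hv]
    have h2 : Lb ((z1 / La v) • v + ((z2 - (z1 / La v) * Lb v) / Lb u) • u) = z2 := by
      rw [map_add, map_smul, map_smul, smul_eq_mul, smul_eq_mul,
        div_mul_cancel₀ _ hu1]
      ring
    rw [hΦ]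
    exact Prod.ext h1 h2
  -- finiteness and cardinalities
  haveI : Finite K := Finite.of_equiv _ pb.basis.equivFun.toEquiv.symm
  have hcardK : Nat.card K = 2 ^ L := by
    rw [Nat.card_congr pb.basis.equivFun.toEquiv, Nat.card_fun, Nat.card_eq_fintype_card,
      Nat.card_eq_fintype_card, Fintype.card_fin, ZMod.card]
    rw [hpb, AdjoinRoot.powerBasis_dim, hdeg]
  -- fiber and kernel
  obtain ⟨h₀, hh₀⟩ := hsurj (y, y')
  have hpred : ∀ ω : σ → K,
      ((∑ i : Fin n, ω (a i) * r ^ (n - 1 - (i : ℕ))) = y ∧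
       (∑ i : Fin n, ω (a' i) * r ^ (n - 1 - (i : ℕ))) = y') ↔ Φ ω = (y, y') := by
    intro ω
    rw [hΦ, LinearMap.prod_apply, Prod.ext_iff]
    simp [hLa, hLb, hashL_apply]
  have efib : {ω : σ → K // Φ ω = (y, y')} ≃ LinearMap.ker Φ :=
    { toFun := fun ω => ⟨ω.1 - h₀, by
        rw [LinearMap.mem_ker, map_sub, ω.2, hh₀, sub_self]⟩
      invFun := fun k => ⟨k.1 + h₀, by
        rw [map_add, hh₀, LinearMap.mem_ker.mp k.2, zero_add]⟩
      left_inv := fun ω => by ext1; simp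
      right_inv := fun k => by ext1; simp }
  have hfib : Nat.card {ω : σ → K //
      (∑ i : Fin n, ω (a i) * r ^ (n - 1 - (i : ℕ))) = y ∧
      (∑ i : Fin n, ω (a' i) * r ^ (n - 1 - (i : ℕ))) = y'} = Nat.card (LinearMap.ker Φ) := by
    rw [Nat.card_congr ((Equiv.subtypeEquivRight hpred).trans efib)]
  have htot : Nat.card (σ → K) = Nat.card (K × K) * Nat.card (LinearMap.ker Φ) := by
    rw [Submodule.card_eq_card_quotient_mul_card (LinearMap.ker Φ),
      Nat.card_congr (Φ.quotKerEquivOfSurjective hsurj).toEquiv]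
    exact Nat.mul_comm _ _
  have hkpos : 0 < Nat.card (LinearMap.ker Φ) := Nat.card_pos
  have hKK : Nat.card (K × K) = 2 ^ (2 * L) := by
    rw [Nat.card_prod, hcardK, ← pow_add, two_mul]
  simp only [prob]
  rw [hfib, htot, hKK]
  have h2 : ((2 : ℚ) ^ (2 * L)) ≠ 0 := by positivity
  have hk : ((Nat.card (LinearMap.ker Φ) : ℚ)) ≠ 0 := by
    exact_mod_cast hkpos.ne'
  push_cast
  rw [div_eq_div_iff (by positivity) (by positivity)]
  ring
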